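/- Let d be even and X₁,…,X_d nonpositive random variables with X_i ~ F_i. Then the supremum of E(X₁⋯X_d) over all couplings is attained by the comonotonic coupling X_i = F_i⁻¹(U), U ~ Uniform[0,1], and equals E(∏_{i=1}^d G_i⁻¹(U)) where G_i is the distribution function of |X_i|. -/

import Mathlib

open MeasureTheory Set ProbabilityTheory Filter Topology
open scoped ENNReal NNReal

/-- Generalized inverse (quantile function). -/
noncomputable def quantile (ν : Measure ℝ) (u : ℝ) : ℝ :=
  sInf {x : ℝ | u ≤ (ν (Iic x)).toReal}

lemma cdf_eq_toReal (μ : Measure ℝ) [IsProbabilityMeasure μ] (x : ℝ) :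
    cdf μ x = (μ (Iic x)).toReal := cdf_eq_real μ x

section quantile_lemmas
variable {ν : Measure ℝ} [IsProbabilityMeasure ν] {u x : ℝ}

lemma quantile_eq_sInf_cdf (ν : Measure ℝ) [IsProbabilityMeasure ν] (u : ℝ) :
    quantile ν u = sInf {x : ℝ | u ≤ cdf ν x} := by
  simp_rw [quantile, cdf_eq_toReal]

lemma bddBelow_cdf_set (hu0 : 0 < u) : BddBelow {x : ℝ | u ≤ cdf ν x} := by
  obtain ⟨x0, hx0⟩ : ∃ x0 : ℝ, cdf ν x0 < u :=
    ((tendsto_cdf_atBot (μ := ν)).eventually_lt_const hu0).exists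
  refine ⟨x0, fun y hy => ?_⟩
  by_contra h
  push_neg at h
  exact absurd (le_trans hy ((cdf ν).mono h.le)) (not_le.2 hx0)

lemma nonempty_cdf_set (hu1 : u < 1) : {x : ℝ | u ≤ cdf ν x}.Nonempty := by
  obtain ⟨x0, hx0⟩ : ∃ x0 : ℝ, u < cdf ν x0 :=
    ((tendsto_cdf_atTop (μ := ν)).eventually_const_lt hu1).exists
  exact ⟨x0, hx0.le⟩

lemma quantile_le_iff (hu0 : 0 < u) (hu1 : u < 1) :
    quantile ν u ≤ x ↔ u ≤ cdf ν x := by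
  rw [quantile_eq_sInf_cdf]
  constructor
  · intro h
    have hall : ∀ y, x < y → u ≤ cdf ν y := by
      intro y hy
      obtain ⟨z, hz, hzy⟩ := exists_lt_of_csInf_lt (nonempty_cdf_set hu1) (lt_of_le_of_lt h hy)
      exact le_trans hz ((cdf ν).mono hzy.le)
    have htend : Tendsto (cdf ν) (𝓝[>] x) (𝓝 (cdf ν x)) :=
      ((cdf ν).right_continuous x).tendsto.mono_left
        (nhdsWithin_mono x Ioi_subset_Ici_self)
    exact ge_of_tendsto htend (eventually_nhdsWithin_of_forall fun y hy => hall y hy)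
  · intro h
    exact csInf_le (bddBelow_cdf_set hu0) h

lemma lt_quantile_iff (hu0 : 0 < u) (hu1 : u < 1) :
    x < quantile ν u ↔ cdf ν x < u := by
  rw [← not_le, ← not_le, quantile_le_iff hu0 hu1]

lemma quantile_lt_iff (hu0 : 0 < u) (hu1 : u < 1) :
    quantile ν u < x ↔ ∃ y, y < x ∧ u ≤ cdf ν y := by
  constructor
  · intro h
    obtain ⟨y, hy1, hy2⟩ := exists_between h
    exact ⟨y, hy2, (quantile_le_iff hu0 hu1).1 hy1.le⟩
  · rintro ⟨y, hy1, hy2⟩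
    exact lt_of_le_of_lt ((quantile_le_iff hu0 hu1).2 hy2) hy1

lemma monotoneOn_quantile (ν : Measure ℝ) [IsProbabilityMeasure ν] :
    MonotoneOn (quantile ν) (Ioo (0:ℝ) 1) := by
  intro u hu v hv huv
  rw [quantile_eq_sInf_cdf, quantile_eq_sInf_cdf]
  exact csInf_le_csInf (bddBelow_cdf_set hu.1) (nonempty_cdf_set hv.2)
    (fun x hx => le_trans huv hx)

lemma quantile_nonneg (hν : ν (Iio 0) = 0) (hu0 : 0 < u) (hu1 : u < 1) :
    0 ≤ quantile ν u := by
  rw [quantile_eq_sInf_cdf]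
  refine le_csInf (nonempty_cdf_set hu1) fun x hx => ?_
  by_contra h
  push_neg at h
  have : cdf ν x = 0 := by
    have h1 : ν (Iic x) = 0 :=
      le_antisymm (hν ▸ measure_mono (Iic_subset_Iio.2 h)) zero_le
    rw [cdf_eq_toReal, h1, ENNReal.toReal_zero]
  have h2 : u ≤ 0 := le_trans hx this.le
  linarith

lemma quantile_nonpos (hν : ν (Iic 0) = 1) (hu0 : 0 < u) (hu1 : u < 1) :
    quantile ν u ≤ 0 := by
  rw [quantile_le_iff hu0 hu1, cdf_eq_toReal, hν]
  simpa using hu1.le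

lemma exists_cdf_lt_of_lt_Iio (hu0 : 0 < u) {s : ℝ} (h : u < (ν (Iio s)).toReal) :
    ∃ y, y < s ∧ u ≤ cdf ν y := by
  by_contra hcon
  push_neg at hcon
  have hsub : ∀ y, y < s → ν (Iic y) < ENNReal.ofReal u := by
    intro y hy
    have := hcon y hy
    rw [cdf_eq_toReal] at this
    exact (ENNReal.lt_ofReal_iff_toReal_lt (measure_ne_top ν _)).2 this
  have hU : Iio s = ⋃ n : ℕ, Iic (s - 1 / (n + 1)) := by
    ext x
    simp only [mem_Iio, mem_iUnion, mem_Iic]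
    constructor
    · intro hx
      obtain ⟨n, hn⟩ := exists_nat_one_div_lt (sub_pos.2 hx)
      exact ⟨n, by linarith⟩
    · rintro ⟨n, hn⟩
      have : (0:ℝ) < 1 / (n + 1) := by positivity
      linarith
  have hmono : Monotone fun n : ℕ => Iic (s - 1 / (n + 1 : ℝ)) := by
    intro m n hmn
    refine Iic_subset_Iic.2 (by
      have h1 : (1 : ℝ) / (n + 1) ≤ 1 / (m + 1) := by
        apply one_div_le_one_div_of_le (by positivity)
        exact_mod_cast by omega
      linarith)
  have : ν (Iio s) ≤ ENNReal.ofReal u := by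
    rw [hU, Directed.measure_iUnion hmono.directed_le]
    exact iSup_le fun n => (hsub _ (sub_lt_self s (by positivity))).le
  have hle : (ν (Iio s)).toReal ≤ u :=
    le_trans (ENNReal.toReal_mono ENNReal.ofReal_ne_top this)
      (ENNReal.toReal_ofReal hu0.le).le
  linarith

end quantile_lemmas

lemma layercake_meas {α : Type*} [MeasurableSpace α] (κ : Measure α) [SigmaFinite κ]
    {d : ℕ} (W : Fin d → α → ℝ) (hW : ∀ i, Measurable (W i)) :
    ∫⁻ a, ∏ i, ENNReal.ofReal (W i a) ∂κ
      = ∫⁻ t, κ {a | ∀ i, t i ∈ Ioo 0 (W i a)}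
          ∂(Measure.pi fun _ : Fin d => (volume : Measure ℝ)) := by
  set π := Measure.pi fun _ : Fin d => (volume : Measure ℝ) with hπ
  set S : Set (α × (Fin d → ℝ)) := {p | ∀ i, p.2 i ∈ Ioo 0 (W i p.1)} with hS
  have hSm : MeasurableSet S := by
    have : S = ⋂ i, ({p : α × (Fin d → ℝ) | 0 < p.2 i} ∩ {p | p.2 i < W i p.1}) := by
      ext p; simp [hS, mem_Ioo, forall_and]
    rw [this]
    refine MeasurableSet.iInter fun i => MeasurableSet.inter ?_ ?_
    · exact measurableSet_lt measurable_const (by fun_prop)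
    · exact measurableSet_lt (by fun_prop) ((hW i).comp measurable_fst)
  have key : ∀ a, (∏ i, ENNReal.ofReal (W i a))
      = ∫⁻ t, S.indicator (1 : α × (Fin d → ℝ) → ℝ≥0∞) (a, t) ∂π := by
    intro a
    have h1 : (fun t => S.indicator (1 : α × (Fin d → ℝ) → ℝ≥0∞) (a, t))
        = (Set.univ.pi fun i => Ioo 0 (W i a)).indicator (1 : (Fin d → ℝ) → ℝ≥0∞) := by
      ext t
      by_cases h : ∀ i, t i ∈ Ioo 0 (W i a)
      · rw [indicator_of_mem (by exact h), indicator_of_mem (by simpa [Set.mem_pi] using h)]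
        rfl
      · rw [indicator_of_notMem (by exact h), indicator_of_notMem
          (by simpa [Set.mem_pi] using h)]
    rw [h1, lintegral_indicator_one (MeasurableSet.univ_pi fun i => measurableSet_Ioo),
      Measure.pi_pi]
    refine Finset.prod_congr rfl fun i _ => ?_
    rw [Real.volume_Ioo, sub_zero]
  calc ∫⁻ a, ∏ i, ENNReal.ofReal (W i a) ∂κ
      = ∫⁻ a, ∫⁻ t, S.indicator (1 : α × (Fin d → ℝ) → ℝ≥0∞) (a, t) ∂π ∂κ :=
        lintegral_congr key
    _ = ∫⁻ t, ∫⁻ a, S.indicator (1 : α × (Fin d → ℝ) → ℝ≥0∞) (a, t) ∂κ ∂π := by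
        exact lintegral_lintegral_swap (measurable_one.indicator hSm).aemeasurable
    _ = ∫⁻ t, κ {a | ∀ i, t i ∈ Ioo 0 (W i a)} ∂π := by
        refine lintegral_congr fun t => ?_
        have h2 : (fun a => S.indicator (1 : α × (Fin d → ℝ) → ℝ≥0∞) (a, t))
            = ({a | ∀ i, t i ∈ Ioo 0 (W i a)}).indicator (1 : α → ℝ≥0∞) := by
          ext a
          by_cases h : ∀ i, t i ∈ Ioo 0 (W i a)
          · rw [indicator_of_mem (by exact h), indicator_of_mem (by exact h)]
            rfl
          · rw [indicator_of_notMem (by exact h), indicator_of_notMem (by exact h)]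
        rw [h2, lintegral_indicator_one]
        have h3 : {a | ∀ i, t i ∈ Ioo 0 (W i a)}
            = ⋂ i, ({a : α | 0 < t i} ∩ {a | t i < W i a}) := by
          ext a; simp [mem_Ioo, forall_and]
        rw [h3]
        exact MeasurableSet.iInter fun i =>
          (MeasurableSet.const _).inter (measurableSet_lt measurable_const (hW i))
lemma layercake_ae {α : Type*} [MeasurableSpace α] (κ : Measure α) [SigmaFinite κ]
    {d : ℕ} (W : Fin d → α → ℝ) (hW : ∀ i, AEMeasurable (W i) κ) :
    ∫⁻ a, ∏ i, ENNReal.ofReal (W i a) ∂κ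
      = ∫⁻ t, κ {a | ∀ i, t i ∈ Ioo 0 (W i a)}
          ∂(Measure.pi fun _ : Fin d => (volume : Measure ℝ)) := by
  set W' : Fin d → α → ℝ := fun i => (hW i).mk (W i) with hW'
  have hae : ∀ᵐ a ∂κ, ∀ i, W i a = W' i a := ae_all_iff.2 fun i => (hW i).ae_eq_mk
  have h1 : ∫⁻ a, ∏ i, ENNReal.ofReal (W i a) ∂κ
      = ∫⁻ a, ∏ i, ENNReal.ofReal (W' i a) ∂κ := by
    refine lintegral_congr_ae (hae.mono fun a ha => ?_)
    exact Finset.prod_congr rfl fun i _ => by rw [ha i]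
  have h2 : ∀ t : Fin d → ℝ, κ {a | ∀ i, t i ∈ Ioo 0 (W i a)}
      = κ {a | ∀ i, t i ∈ Ioo 0 (W' i a)} := by
    intro t
    refine measure_congr (eventuallyEq_set.2 (hae.mono fun a ha => ?_))
    constructor
    · intro h i; rw [← ha i]; exact h i
    · intro h i; rw [ha i]; exact h i
  rw [h1, layercake_meas κ W' fun i => (hW i).measurable_mk]
  exact (lintegral_congr h2).symm
section slices
variable {d : ℕ} [Nonempty (Fin d)]

lemma sliceB (ρ : Fin d → Measure ℝ) [∀ i, IsProbabilityMeasure (ρ i)]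
    (t : Fin d → ℝ) (ht : ∀ i, 0 < t i) (j : Fin d)
    (hj : ∀ i, cdf (ρ i) (t i) ≤ cdf (ρ j) (t j)) :
    {u : ℝ | ∀ i, t i ∈ Ioo 0 (quantile (ρ i) u)} ∩ Ioo 0 1
      = Ioo (cdf (ρ j) (t j)) 1 := by
  ext u
  simp only [mem_inter_iff, mem_setOf_eq, mem_Ioo]
  constructor
  · rintro ⟨h1, hu0, hu1⟩
    exact ⟨(lt_quantile_iff hu0 hu1).1 (h1 j).2, hu1⟩
  · rintro ⟨hcu, hu1⟩
    have hu0 : 0 < u := lt_of_le_of_lt (cdf_nonneg _ _) hcu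
    exact ⟨fun i => ⟨ht i, (lt_quantile_iff hu0 hu1).2 (lt_of_le_of_lt (hj i) hcu)⟩, hu0, hu1⟩

lemma sliceA_sub (F : Fin d → Measure ℝ) [∀ i, IsProbabilityMeasure (F i)]
    (t : Fin d → ℝ) (j : Fin d)
    (hbj : ∀ i, ((F j) (Iio (-(t j)))).toReal ≤ ((F i) (Iio (-(t i)))).toReal)
    (hb1 : ((F j) (Iio (-(t j)))).toReal ≤ 1) (ht : ∀ i, 0 < t i) :
    Ioo 0 (((F j) (Iio (-(t j)))).toReal)
      ⊆ {u : ℝ | ∀ i, t i ∈ Ioo 0 (-(quantile (F i) u))} ∩ Ioo 0 1 := by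
  intro u hu
  obtain ⟨hu0, hub⟩ := hu
  have hu1 : u < 1 := lt_of_lt_of_le hub hb1
  refine ⟨fun i => ⟨ht i, ?_⟩, hu0, hu1⟩
  have hlt : u < ((F i) (Iio (-(t i)))).toReal := lt_of_lt_of_le hub (hbj i)
  obtain ⟨y, hy1, hy2⟩ := exists_cdf_lt_of_lt_Iio hu0 hlt
  have : quantile (F i) u ≤ y := (quantile_le_iff hu0 hu1).2 hy2
  have h3 : quantile (F i) u < -(t i) := lt_of_le_of_lt this hy1
  linarith

lemma sliceA_sup (F : Fin d → Measure ℝ) [∀ i, IsProbabilityMeasure (F i)]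
    (t : Fin d → ℝ) (j : Fin d) :
    {u : ℝ | ∀ i, t i ∈ Ioo 0 (-(quantile (F i) u))} ∩ Ioo 0 1
      ⊆ Ioc 0 (((F j) (Iio (-(t j)))).toReal) := by
  rintro u ⟨h1, hu0, hu1⟩
  refine ⟨hu0, ?_⟩
  have h2 : quantile (F j) u < -(t j) := by
    have := (h1 j).2; linarith
  obtain ⟨y, hy1, hy2⟩ := (quantile_lt_iff hu0 hu1).1 h2
  calc u ≤ cdf (F j) y := hy2
    _ = ((F j) (Iic y)).toReal := cdf_eq_toReal _ _
    _ ≤ ((F j) (Iio (-(t j)))).toReal :=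
        ENNReal.toReal_mono (measure_ne_top _ _) (measure_mono (Iic_subset_Iio.2 hy1))

end slices

lemma cdf_map_abs (F : Measure ℝ) [IsProbabilityMeasure F] (hF : F (Iic 0) = 1)
    {t : ℝ} (ht : 0 < t) :
    cdf (F.map (fun x => |x|)) t = 1 - (F (Iio (-t))).toReal := by
  haveI : IsProbabilityMeasure (F.map (fun x : ℝ => |x|)) :=
    Measure.isProbabilityMeasure_map measurable_abs.aemeasurable
  rw [cdf_eq_toReal, Measure.map_apply measurable_abs measurableSet_Iic]
  have h1 : (fun x : ℝ => |x|) ⁻¹' Iic t = Icc (-t) t := by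
    ext x; simp [abs_le]
  have h2 : Icc (-t) t = Iic t \ Iio (-t) := by
    ext x; simp only [mem_Icc, mem_diff, mem_Iic, mem_Iio, not_lt]; tauto
  have h3 : F (Iic t) = 1 :=
    le_antisymm prob_le_one (hF ▸ measure_mono (Iic_subset_Iic.2 ht.le))
  rw [h1, h2, measure_diff (Iio_subset_Iic (by linarith)) measurableSet_Iio.nullMeasurableSet
    (measure_ne_top _ _), h3, ENNReal.toReal_sub_of_le (h3 ▸ measure_mono
    (fun x (hx : x < -t) => le_trans hx.le (by linarith))) ENNReal.one_ne_top, ENNReal.toReal_one]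

/-- For `d` even and nonpositive marginals, the comonotonic coupling `X_i = F_i⁻¹(U)`
attains the supremum of the expected product, which equals `E(∏ G_i⁻¹(U))` where `G_i`
is the distribution function of `|X_i|`. -/
theorem stmt_14 (d : ℕ) (hd : Even d) (F : Fin d → Measure ℝ)
    [∀ i, IsProbabilityMeasure (F i)]
    (hnonpos : ∀ i, F i (Iic (0:ℝ)) = 1)
    (hIntC : IntegrableOn (fun u => ∏ i, quantile (F i) u) (Icc (0:ℝ) 1) volume)
    (hIntQ : IntegrableOn
      (fun u => ∏ i, quantile ((F i).map (fun x => |x|)) u) (Icc (0:ℝ) 1) volume) :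
    (∫ u in Icc (0:ℝ) 1, ∏ i, quantile (F i) u
        = ∫ u in Icc (0:ℝ) 1, ∏ i, quantile ((F i).map (fun x => |x|)) u) ∧
    (∀ (Ω : Type*) [MeasurableSpace Ω] (μ : Measure Ω) [IsProbabilityMeasure μ]
        (Y : Fin d → Ω → ℝ), (∀ i, Measurable (Y i)) → (∀ i, μ.map (Y i) = F i) →
        Integrable (fun ω => ∏ i, Y i ω) μ →
        ∫ ω, ∏ i, Y i ω ∂μ ≤ ∫ u in Icc (0:ℝ) 1, ∏ i, quantile (F i) u) := by
  classical
  rcases Nat.eq_zero_or_pos d with hd0 | hd0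
  · subst hd0
    constructor
    · rfl
    · intro Ω _ μ _ Y hYm hYd hInt
      simp only [Finset.univ_eq_empty, Finset.prod_empty, integral_const, measure_univ,
        ENNReal.toReal_one, smul_eq_mul, mul_one, Measure.restrict_apply, univ_inter,
        Real.volume_Icc, sub_zero, ENNReal.ofReal_one]
      simp [Measure.real, Real.volume_Icc]
  haveI hne : Nonempty (Fin d) := ⟨⟨0, hd0⟩⟩
  set ν : Fin d → Measure ℝ := fun i => (F i).map (fun x => |x|) with hνdef
  haveI hprob : ∀ i, IsProbabilityMeasure (ν i) := fun i =>
    Measure.isProbabilityMeasure_map measurable_abs.aemeasurable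
  set volR := volume.restrict (Ioo (0:ℝ) 1) with hvolR
  set π := Measure.pi fun _ : Fin d => (volume : Measure ℝ) with hπdef
  have hrestr : volume.restrict (Icc (0:ℝ) 1) = volR :=
    (Measure.restrict_congr_set Ioo_ae_eq_Icc).symm
  have hν0 : ∀ i, ν i (Iio 0) = 0 := by
    intro i
    rw [hνdef, Measure.map_apply measurable_abs measurableSet_Iio]
    have : (fun x : ℝ => |x|) ⁻¹' Iio 0 = ∅ := by
      ext x; simp [abs_nonneg x, not_lt.2 (abs_nonneg x)]
    rw [this, measure_empty]
  -- even product of negations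
  have hprodneg : ∀ g : Fin d → ℝ, (∏ i, -(g i)) = ∏ i, g i := by
    intro g
    have h1 : (∏ i, -(g i)) = (∏ _i : Fin d, (-1:ℝ)) * ∏ i, g i := by
      rw [← Finset.prod_mul_distrib]
      exact Finset.prod_congr rfl fun i _ => by ring
    rw [h1, Finset.prod_const, Finset.card_univ, Fintype.card_fin, hd.neg_one_pow, one_mul]
  -- a.e.-measurability of quantile functions
  have hqa : ∀ i, AEMeasurable (quantile (F i)) volR := fun i =>
    aemeasurable_restrict_of_monotoneOn measurableSet_Ioo (monotoneOn_quantile (F i))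
  have hQa : ∀ i, AEMeasurable (quantile (ν i)) volR := fun i =>
    aemeasurable_restrict_of_monotoneOn measurableSet_Ioo (monotoneOn_quantile (ν i))
  -- conversion of set integrals to lintegrals over π
  have hconv : ∀ W : Fin d → ℝ → ℝ, (∀ i, AEMeasurable (W i) volR) →
      (∀ u ∈ Ioo (0:ℝ) 1, ∀ i, 0 ≤ W i u) →
      ∫ u in Icc (0:ℝ) 1, (∏ i, W i u)
        = (∫⁻ t, volR {u | ∀ i, t i ∈ Ioo 0 (W i u)} ∂π).toReal := by
    intro W hWa hWpos
    have hnn : 0 ≤ᵐ[volR] fun u => ∏ i, W i u :=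
      (ae_restrict_iff' measurableSet_Ioo).2 (Filter.Eventually.of_forall fun u hu =>
        Finset.prod_nonneg fun i _ => hWpos u hu i)
    have hsm : AEStronglyMeasurable (fun u => ∏ i, W i u) volR :=
      (Finset.aemeasurable_fun_prod _ fun i _ => hWa i).aestronglyMeasurable
    rw [show (∫ u in Icc (0:ℝ) 1, (∏ i, W i u)) = ∫ u, (∏ i, W i u) ∂volR from by
        rw [← hrestr],
      integral_eq_lintegral_of_nonneg_ae hnn hsm]
    congr 1
    rw [← layercake_ae volR W hWa]
    refine lintegral_congr_ae ((ae_restrict_iff' measurableSet_Ioo).2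
      (Filter.Eventually.of_forall fun u hu => ?_))
    exact ENNReal.ofReal_prod_of_nonneg fun i _ => hWpos u hu i
  -- equality of the two slice measures
  have hABslice : ∀ t : Fin d → ℝ,
      volR {u | ∀ i, t i ∈ Ioo 0 (-(quantile (F i) u))}
        = volR {u | ∀ i, t i ∈ Ioo 0 (quantile (ν i) u)} := by
    intro t
    rw [hvolR, Measure.restrict_apply' measurableSet_Ioo,
      Measure.restrict_apply' measurableSet_Ioo]
    by_cases hpos : ∀ i, 0 < t i
    · obtain ⟨j, -, hj⟩ := Finset.exists_max_image Finset.univ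
        (fun i => cdf (ν i) (t i)) Finset.univ_nonempty
      have hj' : ∀ i, cdf (ν i) (t i) ≤ cdf (ν j) (t j) := fun i => hj i (Finset.mem_univ i)
      have hc : ∀ i, cdf (ν i) (t i) = 1 - ((F i) (Iio (-(t i)))).toReal := fun i =>
        cdf_map_abs (F i) (hnonpos i) (hpos i)
      set b : Fin d → ℝ := fun i => ((F i) (Iio (-(t i)))).toReal with hbdef
      have hbj : ∀ i, b j ≤ b i := fun i => by
        have := hj' i; rw [hc i, hc j] at this; simp only [hbdef]; linarith
      have hb1 : b j ≤ 1 := by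
        have h := prob_le_one (μ := F j) (s := Iio (-(t j)))
        calc b j ≤ (1 : ℝ≥0∞).toReal := ENNReal.toReal_mono ENNReal.one_ne_top h
          _ = 1 := ENNReal.toReal_one
      have hA : volume ({u | ∀ i, t i ∈ Ioo 0 (-(quantile (F i) u))} ∩ Ioo 0 1)
          = ENNReal.ofReal (b j) := by
        apply le_antisymm
        · refine le_trans (measure_mono (sliceA_sup F t j)) ?_
          rw [Real.volume_Ioc, sub_zero]
        · refine le_trans ?_ (measure_mono (sliceA_sub F t j hbj hb1 hpos))
          rw [Real.volume_Ioo, sub_zero]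
      rw [hA, sliceB ν t hpos j hj', Real.volume_Ioo, hc j]
      ring_nf
      rfl
    · push_neg at hpos
      obtain ⟨i0, hi0⟩ := hpos
      have e1 : {u : ℝ | ∀ i, t i ∈ Ioo 0 (-(quantile (F i) u))} = ∅ :=
        eq_empty_iff_forall_notMem.2 fun u hu => absurd (hu i0).1 (not_lt.2 hi0)
      have e2 : {u : ℝ | ∀ i, t i ∈ Ioo 0 (quantile (ν i) u)} = ∅ :=
        eq_empty_iff_forall_notMem.2 fun u hu => absurd (hu i0).1 (not_lt.2 hi0)
      rw [e1, e2]
  -- the two comonotone integrals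
  have hAint : ∫ u in Icc (0:ℝ) 1, ∏ i, quantile (F i) u
      = (∫⁻ t, volR {u | ∀ i, t i ∈ Ioo 0 (-(quantile (F i) u))} ∂π).toReal := by
    rw [show (fun u => ∏ i, quantile (F i) u) = fun u => ∏ i, -(quantile (F i) u) from
      funext fun u => (hprodneg fun i => quantile (F i) u).symm]
    exact hconv _ (fun i => (hqa i).neg) fun u hu i =>
      neg_nonneg.2 (quantile_nonpos (hnonpos i) hu.1 hu.2)
  have hBint : ∫ u in Icc (0:ℝ) 1, ∏ i, quantile (ν i) u
      = (∫⁻ t, volR {u | ∀ i, t i ∈ Ioo 0 (quantile (ν i) u)} ∂π).toReal := by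
    exact hconv _ hQa fun u hu i => quantile_nonneg (hν0 i) hu.1 hu.2
  have hpart1 : ∫ u in Icc (0:ℝ) 1, ∏ i, quantile (F i) u
      = ∫ u in Icc (0:ℝ) 1, ∏ i, quantile (ν i) u := by
    rw [hAint, hBint, lintegral_congr hABslice]
  -- finiteness of the comonotone lintegral
  have hfin : ∫⁻ t, volR {u | ∀ i, t i ∈ Ioo 0 (quantile (ν i) u)} ∂π ≠ ⊤ := by
    rw [← layercake_ae volR (fun i => quantile (ν i)) hQa]
    have hIntQ' : Integrable (fun u => ∏ i, quantile (ν i) u) volR := by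
      rw [← hrestr]; exact hIntQ
    refine ne_of_lt (lt_of_le_of_lt ?_ hIntQ'.2)
    refine lintegral_mono_ae ((ae_restrict_iff' measurableSet_Ioo).2
      (Filter.Eventually.of_forall fun u hu => ?_))
    rw [← ENNReal.ofReal_prod_of_nonneg fun i _ => quantile_nonneg (hν0 i) hu.1 hu.2]
    exact Real.ofReal_le_enorm _
  refine ⟨hpart1, ?_⟩
  -- Part 2
  intro Ω mΩ μ _ Y hYm hYd hInt
  have hY0 : ∀ᵐ ω ∂μ, ∀ i, Y i ω ≤ 0 := by
    refine ae_all_iff.2 fun i => ?_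
    have h1 : μ (Y i ⁻¹' Iic 0) = 1 := by
      rw [← Measure.map_apply (hYm i) measurableSet_Iic, hYd i]; exact hnonpos i
    rw [ae_iff]
    have : {ω | ¬ Y i ω ≤ 0} = (Y i ⁻¹' Iic 0)ᶜ := rfl
    rw [this]
    exact (prob_compl_eq_zero_iff ((hYm i) measurableSet_Iic)).2 h1
  have hZprod : ∀ᵐ ω ∂μ, (∏ i, Y i ω) = ∏ i, |Y i ω| := by
    refine hY0.mono fun ω hω => ?_
    calc (∏ i, Y i ω) = ∏ i, -(|Y i ω|) :=
          Finset.prod_congr rfl fun i _ => by rw [abs_of_nonpos (hω i)]; ring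
      _ = ∏ i, |Y i ω| := hprodneg _
  have hCslice : ∀ t : Fin d → ℝ, μ {ω | ∀ i, t i ∈ Ioo 0 (|Y i ω|)}
      ≤ volR {u | ∀ i, t i ∈ Ioo 0 (quantile (ν i) u)} := by
    intro t
    by_cases hpos : ∀ i, 0 < t i
    · obtain ⟨j, -, hj⟩ := Finset.exists_max_image Finset.univ
        (fun i => cdf (ν i) (t i)) Finset.univ_nonempty
      have hj' : ∀ i, cdf (ν i) (t i) ≤ cdf (ν j) (t j) := fun i => hj i (Finset.mem_univ i)
      have hB : volR {u | ∀ i, t i ∈ Ioo 0 (quantile (ν i) u)}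
          = ENNReal.ofReal (1 - cdf (ν j) (t j)) := by
        rw [hvolR, Measure.restrict_apply' measurableSet_Ioo, sliceB ν t hpos j hj',
          Real.volume_Ioo]
      rw [hB]
      have hmap : μ.map (fun ω => |Y j ω|) = ν j := by
        rw [show (fun ω => |Y j ω|) = (fun x : ℝ => |x|) ∘ Y j from rfl,
          ← Measure.map_map measurable_abs (hYm j), hYd j]
      calc μ {ω | ∀ i, t i ∈ Ioo 0 (|Y i ω|)} ≤ μ {ω | t j < |Y j ω|} :=
            measure_mono fun ω hω => (hω j).2
        _ = (μ.map fun ω => |Y j ω|) (Ioi (t j)) := by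
            rw [Measure.map_apply (hYm j).abs measurableSet_Ioi]; rfl
        _ = ν j (Ioi (t j)) := by rw [hmap]
        _ = 1 - ν j (Iic (t j)) := by
            rw [← compl_Iic, prob_compl_eq_one_sub measurableSet_Iic]
        _ = ENNReal.ofReal (1 - cdf (ν j) (t j)) := by
            rw [← ofReal_cdf (ν j) (t j), ← ENNReal.ofReal_one,
              ← ENNReal.ofReal_sub _ (cdf_nonneg _ _)]
    · push_neg at hpos
      obtain ⟨i0, hi0⟩ := hpos
      have e1 : {ω | ∀ i, t i ∈ Ioo 0 (|Y i ω|)} = ∅ :=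
        eq_empty_iff_forall_notMem.2 fun ω hω => absurd (hω i0).1 (not_lt.2 hi0)
      rw [e1, measure_empty]
      exact zero_le
  have hCint : ∫ ω, ∏ i, Y i ω ∂μ
      = (∫⁻ t, μ {ω | ∀ i, t i ∈ Ioo 0 (|Y i ω|)} ∂π).toReal := by
    rw [integral_congr_ae hZprod,
      integral_eq_lintegral_of_nonneg_ae
        (Filter.Eventually.of_forall fun ω => Finset.prod_nonneg fun i _ => abs_nonneg _)
        (Finset.measurable_prod _ fun i _ => (hYm i).abs).aestronglyMeasurable]
    congr 1
    rw [← layercake_meas μ (fun i ω => |Y i ω|) fun i => (hYm i).abs]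
    exact lintegral_congr fun ω => ENNReal.ofReal_prod_of_nonneg fun i _ => abs_nonneg _
  rw [hCint, hpart1, hBint]
  exact ENNReal.toReal_mono hfin (lintegral_mono hCslice)
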